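/- Let c₁, c₂ > 0 and let Θ̃ : [0,∞) → ℝ be a continuous function satisfying c₁ (1+ρ)⁻² ≤ Θ̃(ρ) ≤ c₂ (1+ρ)⁻² for all ρ ≥ 0. Define D(r) = ∫₀ʳ (e^{−ρ²/4} / (ρ⁵ Θ̃(ρ)²)) [ ∫₀^ρ s⁵ e^{s²/4} Θ̃(s)³ ds ] dρ for r ≥ 0. Then sup_{r ≥ 0} D(r) < ∞. -/

import Mathlib

noncomputable section


def gg (s : ℝ) : ℝ := s ^ 5 * Real.exp (s ^ 2 / 4) * (((1:ℝ) + s) ^ 6)⁻¹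

lemma gg_contAt {x : ℝ} (hx : (1:ℝ) + x ≠ 0) : ContinuousAt gg x := by
  apply ContinuousAt.mul
  · exact ((continuous_pow 5).continuousAt).mul
      ((Real.continuous_exp.comp (by continuity)).continuousAt)
  · exact ContinuousAt.inv₀ (by fun_prop) (pow_ne_zero 6 hx)

lemma gg_contOn {a b : ℝ} (ha : (-1:ℝ) < a) :
    ContinuousOn gg (Set.Icc a b) := fun x hx =>
  (gg_contAt (by nlinarith [hx.1] : (1:ℝ) + x ≠ 0)).continuousWithinAt

lemma gg_intble {x : ℝ} (hx : (0:ℝ) ≤ x) : IntervalIntegrable gg MeasureTheory.volume 0 x := by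
  apply ContinuousOn.intervalIntegrable
  rw [Set.uIcc_of_le hx]
  exact gg_contOn (by norm_num)

lemma hasDerivAt_mon (x : ℝ) (hx : (1:ℝ) + x ≠ 0) :
    HasDerivAt (fun y : ℝ => y ^ 5 * (((1:ℝ) + y) ^ 6)⁻¹)
      (5 * x ^ 4 * ((1 + x) ^ 6)⁻¹ + x ^ 5 * (-(6 * (1 + x) ^ 5) / ((1 + x) ^ 6) ^ 2)) x := by
  have h1 : HasDerivAt (fun y : ℝ => ((1:ℝ) + y) ^ 6) (6 * (1 + x) ^ 5) x := by
    have := ((hasDerivAt_id x).const_add 1).pow 6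
    exact this.congr_deriv (by simp)
  have h2 := h1.inv (pow_ne_zero 6 hx)
  have h3 := (hasDerivAt_pow 5 x).mul h2
  exact h3.congr_deriv (by simp)

lemma hasDerivAt_expq (x : ℝ) :
    HasDerivAt (fun y : ℝ => Real.exp (y ^ 2 / 4)) (Real.exp (x ^ 2 / 4) * (x / 2)) x := by
  have h1 : HasDerivAt (fun y : ℝ => y ^ 2 / 4) (x / 2) x := by
    have := (hasDerivAt_pow 2 x).div_const 4
    exact this.congr_deriv (by simp; ring)
  exact h1.exp

/-- key comparison -/
lemma key_cmp {ρ : ℝ} (hρ : 0 ≤ ρ) :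
    ∫ s in (0:ℝ)..ρ, gg s ≤ Real.exp (ρ ^ 2 / 4) * (ρ ^ 5 * (((1:ℝ) + ρ) ^ 6)⁻¹) := by
  set F : ℝ → ℝ := fun x =>
    Real.exp (x ^ 2 / 4) * (x ^ 5 * (((1:ℝ) + x) ^ 6)⁻¹) - ∫ s in (0:ℝ)..x, gg s with hF
  have hderiv : ∀ x : ℝ, 0 ≤ x → HasDerivAt F
      (Real.exp (x ^ 2 / 4) * (x / 2) * (x ^ 5 * ((1 + x) ^ 6)⁻¹)
        + Real.exp (x ^ 2 / 4) *
          (5 * x ^ 4 * ((1 + x) ^ 6)⁻¹ + x ^ 5 * (-(6 * (1 + x) ^ 5) / ((1 + x) ^ 6) ^ 2))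
        - gg x) x := by
    intro x hx
    have hx1 : (1:ℝ) + x ≠ 0 := by positivity
    have h1 := (hasDerivAt_expq x).mul (hasDerivAt_mon x hx1)
    have h2 : HasDerivAt (fun y => ∫ s in (0:ℝ)..y, gg s) (gg x) x := by
      have hm : Measurable gg := by unfold gg; fun_prop
      exact intervalIntegral.integral_hasDerivAt_right (gg_intble hx)
        ⟨Set.univ, Filter.univ_mem, hm.aestronglyMeasurable⟩ (gg_contAt hx1)
    exact h1.sub h2
  have hmono : MonotoneOn F (Set.Ici (0:ℝ)) := by
    apply monotoneOn_of_deriv_nonneg (convex_Ici 0)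
    · exact fun x hx => ((hderiv x hx).continuousAt).continuousWithinAt
    · intro x hx
      rw [interior_Ici] at hx
      exact ((hderiv x (le_of_lt hx)).differentiableAt).differentiableWithinAt
    · intro x hx
      rw [interior_Ici] at hx
      rw [(hderiv x (le_of_lt hx)).deriv]
      have hx' : (0:ℝ) < x := hx
      have h1 : (0:ℝ) < 1 + x := by linarith
      have heq : Real.exp (x ^ 2 / 4) * (x / 2) * (x ^ 5 * ((1 + x) ^ 6)⁻¹)
        + Real.exp (x ^ 2 / 4) *
          (5 * x ^ 4 * ((1 + x) ^ 6)⁻¹ + x ^ 5 * (-(6 * (1 + x) ^ 5) / ((1 + x) ^ 6) ^ 2))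
        - gg x = Real.exp (x ^ 2 / 4) * (x ^ 4 * (x ^ 3 - x ^ 2 - 4 * x + 10)) / (2 * (1 + x) ^ 7) := by
        unfold gg
        field_simp
        ring
      rw [heq]
      have hcub : 0 ≤ x ^ 3 - x ^ 2 - 4 * x + 10 := by
        nlinarith [mul_nonneg (le_of_lt hx') (sq_nonneg (x - 2)), sq_nonneg (x - 4/3)]
      positivity
  have h0 : F 0 = 0 := by simp [hF]
  have := hmono (Set.self_mem_Ici) hρ hρ
  rw [h0] at this
  simpa [hF, sub_nonneg] using this

/-- if `Θ̃` is continuous on `[0,∞)` with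
`c₁(1+ρ)⁻² ≤ Θ̃(ρ) ≤ c₂(1+ρ)⁻²`, then
`D(r) = ∫₀ʳ (e^{−ρ²/4}/(ρ⁵ Θ̃(ρ)²)) [∫₀^ρ s⁵ e^{s²/4} Θ̃(s)³ ds] dρ`
is bounded uniformly in `r ≥ 0`. -/
theorem D_uniformly_bounded (c₁ c₂ : ℝ) (hc₁ : 0 < c₁) (hc₂ : 0 < c₂)
    (Θ : ℝ → ℝ) (hcont : ContinuousOn Θ (Set.Ici 0))
    (hlow : ∀ ρ ≥ (0:ℝ), c₁ * ((1 + ρ) ^ 2)⁻¹ ≤ Θ ρ)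
    (hhigh : ∀ ρ ≥ (0:ℝ), Θ ρ ≤ c₂ * ((1 + ρ) ^ 2)⁻¹) :
    ∃ M : ℝ, ∀ r ≥ (0:ℝ),
      (∫ ρ in (0:ℝ)..r, Real.exp (-ρ ^ 2 / 4) / (ρ ^ 5 * Θ ρ ^ 2) *
        ∫ s in (0:ℝ)..ρ, s ^ 5 * Real.exp (s ^ 2 / 4) * Θ s ^ 3) ≤ M := by
  set f : ℝ → ℝ := fun ρ => Real.exp (-ρ ^ 2 / 4) / (ρ ^ 5 * Θ ρ ^ 2) *
    ∫ s in (0:ℝ)..ρ, s ^ 5 * Real.exp (s ^ 2 / 4) * Θ s ^ 3 with hf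
  set K : ℝ := c₂ ^ 3 / c₁ ^ 2 with hK
  have hΘpos : ∀ s : ℝ, 0 ≤ s → 0 < Θ s := fun s hs =>
    lt_of_lt_of_le (by positivity) (hlow s hs)
  -- pointwise bound
  have hpt : ∀ r : ℝ, ∀ ρ ∈ Set.Icc (0:ℝ) r, f ρ ≤ K * ((1 + ρ) ^ 2)⁻¹ := by
    intro r ρ hmem
    obtain ⟨hρ0, _⟩ := hmem
    rcases eq_or_lt_of_le hρ0 with heq | hρpos
    · have : f ρ = 0 := by rw [hf, ← heq]; simp
      rw [this]; positivity
    · have h1ρ : (0:ℝ) < 1 + ρ := by linarith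
      have hΘρ := hΘpos ρ hρ0
      -- inner integral bound
      have hIle : (∫ s in (0:ℝ)..ρ, s ^ 5 * Real.exp (s ^ 2 / 4) * Θ s ^ 3)
          ≤ c₂ ^ 3 * (Real.exp (ρ ^ 2 / 4) * (ρ ^ 5 * (((1:ℝ) + ρ) ^ 6)⁻¹)) := by
        have hint1 : IntervalIntegrable (fun s => s ^ 5 * Real.exp (s ^ 2 / 4) * Θ s ^ 3)
            MeasureTheory.volume 0 ρ := by
          apply ContinuousOn.intervalIntegrable
          rw [Set.uIcc_of_le hρ0]
          apply ContinuousOn.mul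
          · exact ((continuous_pow 5).mul (Real.continuous_exp.comp (by continuity))).continuousOn
          · exact ((hcont.mono (fun x hx => hx.1)).pow 3)
        have hint2 : IntervalIntegrable (fun s => c₂ ^ 3 * gg s) MeasureTheory.volume 0 ρ :=
          (gg_intble hρ0).const_mul _
        have hmono2 : ∀ s ∈ Set.Icc (0:ℝ) ρ,
            s ^ 5 * Real.exp (s ^ 2 / 4) * Θ s ^ 3 ≤ c₂ ^ 3 * gg s := by
          intro s hs
          have hΘs3 : Θ s ^ 3 ≤ (c₂ * ((1 + s) ^ 2)⁻¹) ^ 3 :=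
            pow_le_pow_left₀ (le_of_lt (hΘpos s hs.1)) (hhigh s hs.1) 3
          have h1s : (0:ℝ) < 1 + s := by linarith [hs.1]
          calc s ^ 5 * Real.exp (s ^ 2 / 4) * Θ s ^ 3
              ≤ s ^ 5 * Real.exp (s ^ 2 / 4) * (c₂ * ((1 + s) ^ 2)⁻¹) ^ 3 := by
                apply mul_le_mul_of_nonneg_left hΘs3
                have := hs.1; positivity
            _ = c₂ ^ 3 * gg s := by unfold gg; field_simp
        calc (∫ s in (0:ℝ)..ρ, s ^ 5 * Real.exp (s ^ 2 / 4) * Θ s ^ 3)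
            ≤ ∫ s in (0:ℝ)..ρ, c₂ ^ 3 * gg s :=
              intervalIntegral.integral_mono_on hρ0 hint1 hint2 hmono2
          _ = c₂ ^ 3 * ∫ s in (0:ℝ)..ρ, gg s := intervalIntegral.integral_const_mul _ _
          _ ≤ c₂ ^ 3 * (Real.exp (ρ ^ 2 / 4) * (ρ ^ 5 * (((1:ℝ) + ρ) ^ 6)⁻¹)) := by
              apply mul_le_mul_of_nonneg_left (key_cmp hρ0) (by positivity)
      have hInonneg : 0 ≤ ∫ s in (0:ℝ)..ρ, s ^ 5 * Real.exp (s ^ 2 / 4) * Θ s ^ 3 := by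
        apply intervalIntegral.integral_nonneg hρ0
        intro u hu
        have h0u := hu.1
        have := le_of_lt (hΘpos u h0u)
        positivity
      have hΘlow2 : (c₁ * ((1 + ρ) ^ 2)⁻¹) ^ 2 ≤ Θ ρ ^ 2 :=
        pow_le_pow_left₀ (by positivity) (hlow ρ hρ0) 2
      have hden : (0:ℝ) < ρ ^ 5 * (c₁ * ((1 + ρ) ^ 2)⁻¹) ^ 2 := by positivity
      calc f ρ ≤ Real.exp (-ρ ^ 2 / 4) / (ρ ^ 5 * (c₁ * ((1 + ρ) ^ 2)⁻¹) ^ 2) *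
            (c₂ ^ 3 * (Real.exp (ρ ^ 2 / 4) * (ρ ^ 5 * (((1:ℝ) + ρ) ^ 6)⁻¹))) := by
            rw [hf]
            apply mul_le_mul
            · apply div_le_div_of_nonneg_left (le_of_lt (Real.exp_pos _)) hden
              exact mul_le_mul_of_nonneg_left hΘlow2 (by positivity)
            · exact hIle
            · exact hInonneg
            · positivity
        _ = K * ((1 + ρ) ^ 2)⁻¹ := by
            rw [hK]
            have hexp : Real.exp (-ρ ^ 2 / 4) = (Real.exp (ρ ^ 2 / 4))⁻¹ := by
              rw [← Real.exp_neg]; ring_nf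
            rw [hexp]
            have he := Real.exp_pos (ρ ^ 2 / 4)
            field_simp
  refine ⟨K, fun r hr => ?_⟩
  by_cases hInt : IntervalIntegrable f MeasureTheory.volume 0 r
  · have hint2 : IntervalIntegrable (fun ρ => K * ((1 + ρ) ^ 2)⁻¹)
        MeasureTheory.volume 0 r := by
      apply ContinuousOn.intervalIntegrable
      rw [Set.uIcc_of_le hr]
      apply ContinuousOn.mul continuousOn_const
      intro x hx
      have h1x : ((1:ℝ) + x) ^ 2 ≠ 0 := by nlinarith [hx.1]
      have hc : ContinuousAt (fun y : ℝ => ((1:ℝ) + y) ^ 2) x := by fun_prop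
      exact (hc.inv₀ h1x).continuousWithinAt
    have h1 := intervalIntegral.integral_mono_on hr hInt hint2 (hpt r)
    have h2 : (∫ ρ in (0:ℝ)..r, K * ((1 + ρ) ^ 2)⁻¹) ≤ K := by
      have hG : ∀ x ∈ Set.uIcc (0:ℝ) r, HasDerivAt (fun y : ℝ => K * (-((1 + y)⁻¹)))
          (K * ((1 + x) ^ 2)⁻¹) x := by
        intro x hx
        rw [Set.uIcc_of_le hr] at hx
        have h1x : (1:ℝ) + x ≠ 0 := by nlinarith [hx.1]
        have := (((hasDerivAt_id x).const_add 1).inv h1x).neg.const_mul K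
        exact this.congr_deriv (by simp; ring)
      have hint3 : IntervalIntegrable (fun x => K * ((1 + x) ^ 2)⁻¹)
          MeasureTheory.volume 0 r := hint2
      rw [intervalIntegral.integral_eq_sub_of_hasDerivAt hG hint3]
      have h1r : (0:ℝ) < 1 + r := by linarith
      have : (0:ℝ) < (1 + r)⁻¹ := by positivity
      have hK0 : 0 ≤ K := by positivity
      rw [show ((1:ℝ) + 0) = 1 by norm_num, inv_one]
      nlinarith [mul_nonneg hK0 this.le]
    exact le_trans h1 h2
  · rw [hf] at hInt
    rw [intervalIntegral.integral_undef hInt]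
    positivity
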